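/- Forward direction of the NP-hardness reduction: let s_1,…,s_m be positive integers with β = Σ_{i=1}^m s_i, and construct the SIPP instance with n = (m+1)² squares, side lengths l_1 = (m+1)β and, for each i ∈ {1,…,m}, l_j = (m−i+1)β + s_i for j = i²+1,…,i(i+1) and l_j = (m−i+1)β for j = i(i+1)+1,…,(i+1)², and width bound b = λ = (m+1)(m+2)β/2 + β/2. If there exists S ⊆ {1,…,m} with Σ_{i∈S} s_i = β/2, then there exists a layout A (indeed an RC layout) with W(A) = b and H(A) = λ; in particular the constructed SIPP instance admits a layout of width at most b and height at most λ. -/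

import Mathlib

/-- A `p × q` layout: a matrix whose entries are exactly the integers `1, …, p*q`. -/
def IsLayout (p q : ℕ) (A : Fin p → Fin q → ℕ) : Prop :=
  Function.Injective (fun ij : Fin p × Fin q => A ij.1 ij.2) ∧
  (Set.range fun ij : Fin p × Fin q => A ij.1 ij.2) = Set.Icc 1 (p * q)

/-- Width of a layout with respect to side lengths `l`. -/
def layW (l : ℕ → ℕ) {p q : ℕ} (A : Fin p → Fin q → ℕ) : ℕ :=
  ∑ j : Fin q, Finset.univ.sup fun i : Fin p => l (A i j)

/-- Height of a layout with respect to side lengths `l`. -/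
def layH (l : ℕ → ℕ) {p q : ℕ} (A : Fin p → Fin q → ℕ) : ℕ :=
  ∑ i : Fin p, Finset.univ.sup fun j : Fin q => l (A i j)

/-- RC layouts: obtainable from the 1×1 base layout by add-row and add-column operations. -/
inductive IsRC : {p q : ℕ} → (Fin p → Fin q → ℕ) → Prop
  | base : IsRC (fun (_ : Fin 1) (_ : Fin 1) => 1)
  | addRow {p q : ℕ} {A : Fin p → Fin q → ℕ} (h : IsRC A) :
      IsRC (fun (i : Fin (p + 1)) (j : Fin q) =>
        if hi : (i : ℕ) < p then A ⟨i, hi⟩ j else p * q + (j : ℕ) + 1)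
  | addCol {p q : ℕ} {A : Fin p → Fin q → ℕ} (h : IsRC A) :
      IsRC (fun (i : Fin p) (j : Fin (q + 1)) =>
        if hj : (j : ℕ) < q then A i ⟨j, hj⟩ else p * q + (i : ℕ) + 1)

def addRowM {p q : ℕ} (A : Fin p → Fin q → ℕ) : Fin (p+1) → Fin q → ℕ :=
  fun i j => if hi : (i : ℕ) < p then A ⟨i, hi⟩ j else p * q + (j : ℕ) + 1

def addColM {p q : ℕ} (A : Fin p → Fin q → ℕ) : Fin p → Fin (q+1) → ℕ :=
  fun i j => if hj : (j : ℕ) < q then A i ⟨j, hj⟩ else p * q + (i : ℕ) + 1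

lemma isRC_addRowM {p q : ℕ} {A : Fin p → Fin q → ℕ} (h : IsRC A) : IsRC (addRowM A) := h.addRow

lemma isRC_addColM {p q : ℕ} {A : Fin p → Fin q → ℕ} (h : IsRC A) : IsRC (addColM A) := h.addCol

lemma layout_mem {p q : ℕ} {A : Fin p → Fin q → ℕ} (h : IsLayout p q A) (i : Fin p) (j : Fin q) :
    1 ≤ A i j ∧ A i j ≤ p * q := by
  have : A i j ∈ Set.Icc 1 (p*q) := by rw [← h.2]; exact ⟨(i, j), rfl⟩
  exact this

lemma isLayout_addRow {p q : ℕ} {A : Fin p → Fin q → ℕ} (h : IsLayout p q A) :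
    IsLayout (p+1) q (addRowM A) := by
  have hmem := layout_mem h
  obtain ⟨hinj, hran⟩ := h
  constructor
  · rintro ⟨i1, j1⟩ ⟨i2, j2⟩ hEq
    simp only [addRowM] at hEq
    by_cases h1 : (i1 : ℕ) < p <;> by_cases h2 : (i2 : ℕ) < p
    · rw [dif_pos h1, dif_pos h2] at hEq
      have h3 := hinj (a₁ := (⟨i1, h1⟩, j1)) (a₂ := (⟨i2, h2⟩, j2)) hEq
      simp only [Prod.ext_iff, Fin.ext_iff] at h3 ⊢
      exact h3
    · rw [dif_pos h1, dif_neg h2] at hEq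
      have := (hmem ⟨i1, h1⟩ j1).2
      omega
    · rw [dif_neg h1, dif_pos h2] at hEq
      have := (hmem ⟨i2, h2⟩ j2).2
      omega
    · rw [dif_neg h1, dif_neg h2] at hEq
      have hi1 := i1.isLt
      have hi2 := i2.isLt
      simp only [Prod.ext_iff, Fin.ext_iff]
      omega
  · ext x
    simp only [Set.mem_range, Set.mem_Icc, Prod.exists]
    have hq : (p+1)*q = p*q + q := by ring
    constructor
    · rintro ⟨i, j, rfl⟩
      by_cases hi : (i : ℕ) < p
      · simp only [addRowM, dif_pos hi]
        have := hmem ⟨i, hi⟩ j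
        omega
      · simp only [addRowM, dif_neg hi]
        have := j.isLt
        omega
    · rintro ⟨h1, h2⟩
      by_cases hx : x ≤ p * q
      · have : x ∈ Set.range fun ij : Fin p × Fin q => A ij.1 ij.2 := by
          rw [hran]; exact ⟨h1, hx⟩
        obtain ⟨⟨i, j⟩, rfl⟩ := this
        exact ⟨⟨(i : ℕ), by omega⟩, j, by simp [addRowM, i.isLt]⟩
      · refine ⟨⟨p, by omega⟩, ⟨x - p*q - 1, by omega⟩, ?_⟩
        simp only [addRowM, dif_neg (lt_irrefl p)]
        omega

lemma isLayout_transpose {p q : ℕ} {A : Fin p → Fin q → ℕ} (h : IsLayout p q A) :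
    IsLayout q p (fun j i => A i j) := by
  obtain ⟨hinj, hran⟩ := h
  constructor
  · rintro ⟨j1, i1⟩ ⟨j2, i2⟩ hEq
    have h3 := hinj (a₁ := (i1, j1)) (a₂ := (i2, j2)) hEq
    simp only [Prod.ext_iff] at h3 ⊢
    exact ⟨h3.2, h3.1⟩
  · rw [Nat.mul_comm q p, ← hran]
    ext x
    simp only [Set.mem_range, Prod.exists]
    exact ⟨fun ⟨j, i, h⟩ => ⟨i, j, h⟩, fun ⟨i, j, h⟩ => ⟨j, i, h⟩⟩

lemma isLayout_addCol {p q : ℕ} {A : Fin p → Fin q → ℕ} (h : IsLayout p q A) :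
    IsLayout p (q+1) (addColM A) := by
  have h2 := isLayout_transpose (isLayout_addRow (isLayout_transpose h))
  have he : addColM A = fun i j => (addRowM (fun a b => A b a)) j i := by
    funext i j
    simp only [addRowM, addColM, Nat.mul_comm p q]
  rw [he]; exact h2

lemma addColM_castSucc {p q : ℕ} (A : Fin p → Fin q → ℕ) (i : Fin p) (j : Fin q) :
    addColM A i j.castSucc = A i j := by
  simp [addColM, j.isLt]

lemma addColM_last {p q : ℕ} (A : Fin p → Fin q → ℕ) (i : Fin p) :
    addColM A i (Fin.last q) = p * q + (i : ℕ) + 1 := by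
  simp [addColM]

lemma addRowM_castSucc {p q : ℕ} (A : Fin p → Fin q → ℕ) (i : Fin p) (j : Fin q) :
    addRowM A i.castSucc j = A i j := by
  simp [addRowM, i.isLt]

lemma addRowM_last {p q : ℕ} (A : Fin p → Fin q → ℕ) (j : Fin q) :
    addRowM A (Fin.last p) j = p * q + (j : ℕ) + 1 := by
  simp [addRowM]

lemma layW_addCol {p q : ℕ} (l : ℕ → ℕ) (A : Fin p → Fin q → ℕ) (c : ℕ) (hp : 0 < p)
    (hc : ∀ i : Fin p, l (p * q + (i : ℕ) + 1) = c) :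
    layW l (addColM A) = layW l A + c := by
  have : Nonempty (Fin p) := ⟨⟨0, hp⟩⟩
  unfold layW
  rw [Fin.sum_univ_castSucc]
  congr 1
  · exact Finset.sum_congr rfl fun j _ => by
      simp only [addColM_castSucc]
  · simp only [addColM_last, hc]
    exact Finset.sup_const Finset.univ_nonempty c

lemma layH_addCol {p q : ℕ} (l : ℕ → ℕ) (A : Fin p → Fin q → ℕ) (hq : 0 < q)
    (hdom : ∀ (i : Fin p) (j : Fin q), l (p * q + (i : ℕ) + 1) ≤ l (A i j)) :
    layH l (addColM A) = layH l A := by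
  unfold layH
  apply Finset.sum_congr rfl
  intro i _
  apply le_antisymm
  · apply Finset.sup_le
    intro j _
    by_cases hj : (j : ℕ) < q
    · have : addColM A i j = A i ⟨j, hj⟩ := by simp [addColM, hj]
      rw [this]
      exact Finset.le_sup (f := fun j : Fin q => l (A i j)) (Finset.mem_univ (⟨(j : ℕ), hj⟩ : Fin q))
    · have : addColM A i j = p * q + (i : ℕ) + 1 := by simp [addColM, hj]
      rw [this]
      exact le_trans (hdom i ⟨0, hq⟩)
        (Finset.le_sup (f := fun j : Fin q => l (A i j)) (Finset.mem_univ (⟨0, hq⟩ : Fin q)))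
  · apply Finset.sup_le
    intro j _
    rw [← addColM_castSucc A i j]
    exact Finset.le_sup (f := fun j : Fin (q+1) => l (addColM A i j)) (Finset.mem_univ j.castSucc)

lemma layH_addRow {p q : ℕ} (l : ℕ → ℕ) (A : Fin p → Fin q → ℕ) (c : ℕ) (hq : 0 < q)
    (hc : ∀ j : Fin q, l (p * q + (j : ℕ) + 1) = c) :
    layH l (addRowM A) = layH l A + c := by
  have : Nonempty (Fin q) := ⟨⟨0, hq⟩⟩
  unfold layH
  rw [Fin.sum_univ_castSucc]
  congr 1
  · exact Finset.sum_congr rfl fun i _ => by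
      simp only [addRowM_castSucc]
  · simp only [addRowM_last, hc]
    exact Finset.sup_const Finset.univ_nonempty c

lemma layW_addRow {p q : ℕ} (l : ℕ → ℕ) (A : Fin p → Fin q → ℕ) (hp : 0 < p)
    (hdom : ∀ (i : Fin p) (j : Fin q), l (p * q + (j : ℕ) + 1) ≤ l (A i j)) :
    layW l (addRowM A) = layW l A := by
  unfold layW
  apply Finset.sum_congr rfl
  intro j _
  apply le_antisymm
  · apply Finset.sup_le
    intro i _
    by_cases hi : (i : ℕ) < p
    · have : addRowM A i j = A ⟨i, hi⟩ j := by simp [addRowM, hi]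
      rw [this]
      exact Finset.le_sup (f := fun i : Fin p => l (A i j)) (Finset.mem_univ (⟨(i : ℕ), hi⟩ : Fin p))
    · have : addRowM A i j = p * q + (j : ℕ) + 1 := by simp [addRowM, hi]
      rw [this]
      exact le_trans (hdom ⟨0, hp⟩ j)
        (Finset.le_sup (f := fun i : Fin p => l (A i j)) (Finset.mem_univ (⟨0, hp⟩ : Fin p)))
  · apply Finset.sup_le
    intro i _
    rw [← addRowM_castSucc A i j]
    exact Finset.le_sup (f := fun i : Fin (p+1) => l (addRowM A i j)) (Finset.mem_univ i.castSucc)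

lemma gauss_refl (m : ℕ) : 2 * ∑ i ∈ Finset.Icc 1 m, (m - i + 1) = m * (m + 1) := by
  have h1 : ∑ i ∈ Finset.Icc 1 m, (m - i + 1) = ∑ i ∈ Finset.Icc 1 m, i := by
    apply Finset.sum_nbij' (fun i => m + 1 - i) (fun i => m + 1 - i) <;>
      simp only [Finset.mem_Icc] <;> intros <;> omega
  have h3 : ∑ i ∈ Finset.Ico 0 1, i + ∑ i ∈ Finset.Ico 1 (m+1), i
      = ∑ i ∈ Finset.Ico 0 (m+1), i :=
    Finset.sum_Ico_consecutive _ (by omega) (by omega)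
  have e1 : Finset.Ico 1 (m+1) = Finset.Icc 1 m := Finset.Ico_add_one_right_eq_Icc 1 m
  have e2 : Finset.Ico 0 (m+1) = Finset.range (m+1) := by rw [Nat.Ico_zero_eq_range]
  rw [e1, e2] at h3
  have h4 := Finset.sum_range_id_mul_two (m + 1)
  have h5 : (m + 1) * ((m + 1) - 1) = m * (m + 1) := by
    simp [Nat.succ_sub_one, Nat.mul_comm]
  simp at h3
  omega

/-- Forward direction of the NP-hardness reduction: if the partition
instance `s_1, …, s_m` (with `β = Σ s_i`) has a subset `S` with `Σ_{i∈S} s_i = β/2`, then the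
constructed SIPP instance admits a layout (indeed an RC layout) with width and height both
exactly `(m+1)(m+2)β/2 + β/2`. -/
theorem partition_to_sipp (m : ℕ) (s : ℕ → ℕ)
    (hs : ∀ i, 1 ≤ i → i ≤ m → 0 < s i)
    (β : ℕ) (hβ : β = ∑ i ∈ Finset.Icc 1 m, s i)
    (l : ℕ → ℕ) (hl1 : l 1 = (m + 1) * β)
    (hla : ∀ i, 1 ≤ i → i ≤ m → ∀ j, i ^ 2 + 1 ≤ j → j ≤ i * (i + 1) →
      l j = (m - i + 1) * β + s i)
    (hlb : ∀ i, 1 ≤ i → i ≤ m → ∀ j, i * (i + 1) + 1 ≤ j → j ≤ (i + 1) ^ 2 →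
      l j = (m - i + 1) * β)
    (S : Finset ℕ) (hS : S ⊆ Finset.Icc 1 m)
    (hsum : (∑ i ∈ S, (s i : ℚ)) = (β : ℚ) / 2) :
    ∃ (p q : ℕ) (A : Fin p → Fin q → ℕ),
      (m + 1) ^ 2 ≤ p * q ∧ IsLayout p q A ∧ IsRC A ∧
      (layW l A : ℚ) = ((m + 1) * (m + 2) * β : ℚ) / 2 + (β : ℚ) / 2 ∧
      (layH l A : ℚ) = ((m + 1) * (m + 2) * β : ℚ) / 2 + (β : ℚ) / 2 := by
  have key : ∀ k, k ≤ m → ∃ A : Fin (k+1) → Fin (k+1) → ℕ,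
      IsLayout (k+1) (k+1) A ∧ IsRC A ∧
      (∀ (i j : Fin (k+1)), (m - k + 1) * β ≤ l (A i j)) ∧
      layW l A = (m+1)*β + ∑ i ∈ Finset.Icc 1 k, ((m - i + 1)*β + if i ∈ S then s i else 0) ∧
      layH l A = (m+1)*β + ∑ i ∈ Finset.Icc 1 k, ((m - i + 1)*β + if i ∈ S then 0 else s i) := by
    intro k
    induction k with
    | zero =>
      intro _
      have hone : ∀ x : Fin 1 × Fin 1, x = (0, 0) := by
        rintro ⟨x1, x2⟩
        have := x1.isLt; have := x2.isLt
        simp only [Prod.ext_iff, Fin.ext_iff]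
        omega
      have hbase : IsLayout 1 1 (fun (_ : Fin 1) (_ : Fin 1) => 1) := by
        constructor
        · intro a b _
          rw [hone a, hone b]
        · ext x
          simp only [Set.mem_range, Set.mem_Icc, Prod.exists]
          constructor
          · rintro ⟨i, j, rfl⟩; omega
          · rintro ⟨h1, h2⟩; exact ⟨0, 0, by omega⟩
      refine ⟨fun _ _ => 1, hbase, IsRC.base, ?_, ?_, ?_⟩
      · intro i j
        simp [hl1]
      · simp [layW, hl1]
      · simp [layH, hl1]
    | succ k ih =>
      intro hk1
      obtain ⟨A, hL, hRC, hInv, hW, hH⟩ := ih (by omega)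
      have hsle : s (k+1) ≤ β := by
        rw [hβ]
        exact Finset.single_le_sum (f := s) (fun i _ => Nat.zero_le _)
          (Finset.mem_Icc.mpr ⟨by omega, hk1⟩)
      set cB := (m - (k+1) + 1) * β with hcB
      set cA := (m - (k+1) + 1) * β + s (k+1) with hcA
      have hmono : (m - (k+1) + 1) + 1 = m - k + 1 := by omega
      have hBle : cB ≤ (m - k + 1) * β := Nat.mul_le_mul_right β (by omega)
      have hAle : cA ≤ (m - k + 1) * β := by
        have : (m - k + 1) * β = (m - (k+1) + 1) * β + β := by rw [← hmono]; ring
        omega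
      have hBA : cB ≤ cA := by omega
      have hval1 : ∀ v, (k+1)*(k+1) + 1 ≤ v → v ≤ (k+1)*(k+2) → l v = cA := by
        intro v h1 h2
        have e1 : (k+1)^2 = (k+1)*(k+1) := by ring
        have e2 : (k+1)*((k+1)+1) = (k+1)*(k+2) := by ring
        exact hla (k+1) (by omega) hk1 v (by omega) (by omega)
      have hval2 : ∀ v, (k+1)*(k+2) + 1 ≤ v → v ≤ (k+2)*(k+2) → l v = cB := by
        intro v h1 h2
        have e1 : ((k+1)+1)^2 = (k+2)*(k+2) := by ring
        exact hlb (k+1) (by omega) hk1 v h1 (by omega)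
      by_cases hcS : (k+1) ∈ S
      · -- add column first, then row
        set A1 := addColM A with hA1
        have e12 : (k+1)*(k+1+1) = (k+1)*(k+2) := by ring
        have hcnew : ∀ i : Fin (k+1), l ((k+1)*(k+1) + (i : ℕ) + 1) = cA := by
          intro i
          have := i.isLt
          have e : (k+1)*(k+2) = (k+1)*(k+1) + (k+1) := by ring
          exact hval1 _ (by omega) (by omega)
        have hdom1 : ∀ (i j : Fin (k+1)), l ((k+1)*(k+1) + (i : ℕ) + 1) ≤ l (A i j) := by
          intro i j
          rw [hcnew i]
          exact le_trans hAle (hInv i j)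
        have hW1 : layW l A1 = layW l A + cA := layW_addCol l A cA (by omega) hcnew
        have hH1 : layH l A1 = layH l A := layH_addCol l A (by omega) hdom1
        set A2 := addRowM A1 with hA2
        have hcnew2 : ∀ j : Fin (k+1+1), l ((k+1)*(k+1+1) + (j : ℕ) + 1) = cB := by
          intro j
          have := j.isLt
          have e : (k+2)*(k+2) = (k+1)*(k+2) + (k+2) := by ring
          rw [e12]
          exact hval2 _ (by omega) (by omega)
        have hA1val : ∀ (i : Fin (k+1)) (j : Fin (k+1+1)), cB ≤ l (A1 i j) := by
          intro i j
          by_cases hj : (j : ℕ) < k+1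
          · have : A1 i j = A i ⟨j, hj⟩ := by simp [hA1, addColM, hj]
            rw [this]
            exact le_trans hBle (hInv i _)
          · have : A1 i j = (k+1)*(k+1) + (i : ℕ) + 1 := by simp [hA1, addColM, hj]
            rw [this, hcnew i]
            exact hBA
        have hdom2 : ∀ (i : Fin (k+1)) (j : Fin (k+1+1)),
            l ((k+1)*(k+1+1) + (j : ℕ) + 1) ≤ l (A1 i j) := by
          intro i j
          rw [hcnew2 j]
          exact hA1val i j
        have hW2 : layW l A2 = layW l A1 := layW_addRow l A1 (by omega) hdom2
        have hH2 : layH l A2 = layH l A1 + cB := layH_addRow l A1 cB (by omega) hcnew2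
        refine ⟨A2, isLayout_addRow (isLayout_addCol hL), (hRC.addCol).addRow, ?_, ?_, ?_⟩
        · intro i j
          by_cases hi : (i : ℕ) < k+1
          · have : A2 i j = A1 ⟨i, hi⟩ j := by simp [hA2, addRowM, hi]
            rw [this]
            exact hA1val _ _
          · have : A2 i j = (k+1)*(k+1+1) + (j : ℕ) + 1 := by simp [hA2, addRowM, hi]
            rw [this, hcnew2 j]
        · rw [hW2, hW1, hW, Finset.sum_Icc_succ_top (by omega : 1 ≤ k+1)]
          simp only [hcS, if_pos]
          omega
        · rw [hH2, hH1, hH, Finset.sum_Icc_succ_top (by omega : 1 ≤ k+1)]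
          simp only [hcS, if_pos]
          omega
      · -- add row first, then column
        set A1 := addRowM A with hA1
        have hcnew : ∀ j : Fin (k+1), l ((k+1)*(k+1) + (j : ℕ) + 1) = cA := by
          intro j
          have := j.isLt
          have e : (k+1)*(k+2) = (k+1)*(k+1) + (k+1) := by ring
          exact hval1 _ (by omega) (by omega)
        have hdom1 : ∀ (i j : Fin (k+1)), l ((k+1)*(k+1) + (j : ℕ) + 1) ≤ l (A i j) := by
          intro i j
          rw [hcnew j]
          exact le_trans hAle (hInv i j)
        have hH1 : layH l A1 = layH l A + cA := layH_addRow l A cA (by omega) hcnew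
        have hW1 : layW l A1 = layW l A := layW_addRow l A (by omega) hdom1
        set A2 := addColM A1 with hA2
        have e12 : (k+1+1)*(k+1) = (k+1)*(k+2) := by ring
        have hcnew2 : ∀ i : Fin (k+1+1), l ((k+1+1)*(k+1) + (i : ℕ) + 1) = cB := by
          intro i
          have := i.isLt
          have e : (k+2)*(k+2) = (k+1)*(k+2) + (k+2) := by ring
          rw [e12]
          exact hval2 _ (by omega) (by omega)
        have hA1val : ∀ (i : Fin (k+1+1)) (j : Fin (k+1)), cB ≤ l (A1 i j) := by
          intro i j
          by_cases hi : (i : ℕ) < k+1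
          · have : A1 i j = A ⟨i, hi⟩ j := by simp [hA1, addRowM, hi]
            rw [this]
            exact le_trans hBle (hInv _ _)
          · have : A1 i j = (k+1)*(k+1) + (j : ℕ) + 1 := by simp [hA1, addRowM, hi]
            rw [this, hcnew j]
            exact hBA
        have hdom2 : ∀ (i : Fin (k+1+1)) (j : Fin (k+1)),
            l ((k+1+1)*(k+1) + (i : ℕ) + 1) ≤ l (A1 i j) := by
          intro i j
          rw [hcnew2 i]
          exact hA1val i j
        have hH2 : layH l A2 = layH l A1 := layH_addCol l A1 (by omega) hdom2
        have hW2 : layW l A2 = layW l A1 + cB := layW_addCol l A1 cB (by omega) hcnew2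
        refine ⟨A2, isLayout_addCol (isLayout_addRow hL), (hRC.addRow).addCol, ?_, ?_, ?_⟩
        · intro i j
          by_cases hj : (j : ℕ) < k+1
          · have : A2 i j = A1 i ⟨j, hj⟩ := by simp [hA2, addColM, hj]
            rw [this]
            exact hA1val _ _
          · have : A2 i j = (k+1+1)*(k+1) + (i : ℕ) + 1 := by simp [hA2, addColM, hj]
            rw [this, hcnew2 i]
        · rw [hW2, hW1, hW, Finset.sum_Icc_succ_top (by omega : 1 ≤ k+1)]
          simp only [hcS, if_neg, not_false_iff]
          omega
        · rw [hH2, hH1, hH, Finset.sum_Icc_succ_top (by omega : 1 ≤ k+1)]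
          simp only [hcS, if_neg, not_false_iff]
          omega
  obtain ⟨A, hL, hRC, _, hW, hH⟩ := key m le_rfl
  have hsplitW : ∑ i ∈ Finset.Icc 1 m, ((m - i + 1)*β + if i ∈ S then s i else 0)
      = (∑ i ∈ Finset.Icc 1 m, (m - i + 1))*β + ∑ i ∈ S, s i := by
    rw [Finset.sum_add_distrib, ← Finset.sum_mul]
    congr 1
    rw [Finset.sum_ite_mem, Finset.inter_eq_right.mpr hS]
  have hsplitH : ∑ i ∈ Finset.Icc 1 m, ((m - i + 1)*β + if i ∈ S then 0 else s i)
      = (∑ i ∈ Finset.Icc 1 m, (m - i + 1))*β + ∑ i ∈ Finset.Icc 1 m \ S, s i := by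
    rw [Finset.sum_add_distrib, ← Finset.sum_mul]
    congr 1
    have : ∀ i ∈ Finset.Icc 1 m, (if i ∈ S then 0 else s i)
        = (if i ∈ Finset.Icc 1 m \ S then s i else 0) := by
      intro i hi
      by_cases h : i ∈ S <;> simp [h, Finset.mem_sdiff, hi]
    rw [Finset.sum_congr rfl this, Finset.sum_ite_mem,
      Finset.inter_eq_right.mpr Finset.sdiff_subset]
  have hsd : ∑ i ∈ Finset.Icc 1 m \ S, s i + ∑ i ∈ S, s i = β := by
    rw [hβ]; exact Finset.sum_sdiff hS
  have hTQ : 2 * ((∑ i ∈ Finset.Icc 1 m, (m - i + 1) : ℕ) : ℚ) = (m : ℚ) * (m + 1) := by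
    exact_mod_cast gauss_refl m
  have hsdQ : ((∑ i ∈ Finset.Icc 1 m \ S, s i : ℕ) : ℚ) = (β : ℚ) / 2 := by
    have h1 : ((∑ i ∈ Finset.Icc 1 m \ S, s i : ℕ) : ℚ) + ∑ i ∈ S, (s i : ℚ) = (β : ℚ) := by
      exact_mod_cast congrArg (Nat.cast : ℕ → ℚ) hsd
    linarith [hsum, h1]
  refine ⟨m+1, m+1, A, le_of_eq (pow_two (m+1)), hL, hRC, ?_, ?_⟩
  · rw [hW, hsplitW]
    push_cast at hTQ ⊢
    linear_combination hsum + (β : ℚ)/2 * hTQ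
  · rw [hH, hsplitH]
    push_cast at hTQ hsdQ ⊢
    linear_combination hsdQ + (β : ℚ)/2 * hTQ
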